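/- Let H : 𝕋² × ℝ² → ℝ be a C¹ Hamiltonian of the form H(θ,R) = h(R) + ε cos(⟨θ,k^⊥⟩) where h is C¹, k ∈ ℤ² ∖ {0}, and Λ = R₀ + span(k^⊥) is a line such that ∇h(R) ∈ span(k) for all R ∈ Λ. If θ₀ satisfies sin(⟨θ₀,k^⊥⟩) = 1, then the solution z(t) = (z_θ(t), z_R(t)) of the Hamiltonian system with initial condition (θ₀, R₀) satisfies z_R(t) = R₀ + t ε k^⊥ for all t in its interval of definition. -/

import Mathlib

open Real Set

/-- A function with zero derivative at every point of an order-connected set containing `0`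
is constant on that set. -/
lemma const_of_zero_deriv (I : Set ℝ) (hI : I.OrdConnected) (h0I : (0 : ℝ) ∈ I)
    (f : ℝ → ℝ) (hf : ∀ t ∈ I, HasDerivAt f 0 t) : ∀ t ∈ I, f t = f 0 := by
  intro t ht
  rcases lt_trichotomy t 0 with hlt | heq | hgt
  · have hsub : Icc t 0 ⊆ I := hI.out ht h0I
    obtain ⟨c, _, hc⟩ := exists_hasDerivAt_eq_slope f (fun _ => 0) hlt
      (fun x hx => ((hf x (hsub hx)).continuousAt).continuousWithinAt)
      (fun x hx => hf x (hsub (Ioo_subset_Icc_self hx)))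
    have ht0 : (0 : ℝ) - t ≠ 0 := by linarith
    have h2 := hc.symm
    rw [div_eq_iff ht0, zero_mul] at h2
    linarith
  · rw [heq]
  · have hsub : Icc 0 t ⊆ I := hI.out h0I ht
    obtain ⟨c, _, hc⟩ := exists_hasDerivAt_eq_slope f (fun _ => 0) hgt
      (fun x hx => ((hf x (hsub hx)).continuousAt).continuousWithinAt)
      (fun x hx => hf x (hsub (Ioo_subset_Icc_self hx)))
    have ht0 : t - 0 ≠ 0 := by linarith
    have h2 := hc.symm
    rw [div_eq_iff ht0, zero_mul] at h2
    linarith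

/-- for `H(θ,R) = h(R) + ε cos(⟨θ,k⊥⟩)`, if `∇h(R) ∈ span(k)` for every `R` on
the line `Λ = R₀ + span(k⊥)` and `sin(⟨θ₀,k⊥⟩) = 1`, then the solution with initial
condition `(θ₀,R₀)` has action component `z_R(t) = R₀ + t ε k⊥` on its interval of
definition. -/
theorem stmt_7 (h : ℝ × ℝ → ℝ) (hC1 : ContDiff ℝ 1 h)
    (k : ℤ × ℤ) (hk : k ≠ 0) (ε : ℝ)
    (θ₀ R₀ : ℝ × ℝ)
    (hgrad : ∀ R : ℝ × ℝ, (∃ s : ℝ, R = (R₀.1 + s * (-(k.2 : ℝ)), R₀.2 + s * (k.1 : ℝ))) →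
      ∃ c : ℝ, deriv (fun r => h (r, R.2)) R.1 = c * (k.1 : ℝ) ∧
               deriv (fun r => h (R.1, r)) R.2 = c * (k.2 : ℝ))
    (hθ₀ : Real.sin (θ₀.1 * (-(k.2 : ℝ)) + θ₀.2 * (k.1 : ℝ)) = 1)
    (I : Set ℝ) (hI : I.OrdConnected) (h0I : (0 : ℝ) ∈ I)
    (zθ zR : ℝ → ℝ × ℝ)
    (hinit : zθ 0 = θ₀ ∧ zR 0 = R₀)
    -- the Hamiltonian equations `θ̇ = ∂_R H = ∇h(R)`,
    -- `Ṙ = -∂_θ H = ε sin(⟨θ,k⊥⟩) k⊥` along the solution: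
    (hode : ∀ t ∈ I,
      HasDerivAt (fun s => (zθ s).1) (deriv (fun r => h (r, (zR t).2)) ((zR t).1)) t ∧
      HasDerivAt (fun s => (zθ s).2) (deriv (fun r => h ((zR t).1, r)) ((zR t).2)) t ∧
      HasDerivAt (fun s => (zR s).1)
        (ε * Real.sin ((zθ t).1 * (-(k.2 : ℝ)) + (zθ t).2 * (k.1 : ℝ)) * (-(k.2 : ℝ))) t ∧
      HasDerivAt (fun s => (zR s).2)
        (ε * Real.sin ((zθ t).1 * (-(k.2 : ℝ)) + (zθ t).2 * (k.1 : ℝ)) * (k.1 : ℝ)) t) :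
    ∀ t ∈ I, zR t = (R₀.1 + t * ε * (-(k.2 : ℝ)), R₀.2 + t * ε * (k.1 : ℝ)) := by
  -- the component of `zR - R₀` along `k` is conserved (and zero)
  have key : ∀ t ∈ I,
      ((zR t).1 - R₀.1) * (k.1 : ℝ) + ((zR t).2 - R₀.2) * (k.2 : ℝ) = 0 := by
    have hc := const_of_zero_deriv I hI h0I
      (fun t => ((zR t).1 - R₀.1) * (k.1 : ℝ) + ((zR t).2 - R₀.2) * (k.2 : ℝ))
      (by
        intro t ht
        have h3 := (hode t ht).2.2.1
        have h4 := (hode t ht).2.2.2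
        have := ((h3.sub_const R₀.1).mul_const (k.1 : ℝ)).add
          ((h4.sub_const R₀.2).mul_const (k.2 : ℝ))
        convert this using 1
        all_goals first | rfl | ring)
    intro t ht
    have h' := hc t ht
    simp only [hinit.2] at h'
    rw [h']
    ring
  -- hence `zR t` lies on the line `Λ`
  have hmem : ∀ t ∈ I, ∃ s : ℝ,
      zR t = (R₀.1 + s * (-(k.2 : ℝ)), R₀.2 + s * (k.1 : ℝ)) := by
    intro t ht
    have hn : ((k.1 : ℝ)^2 + (k.2 : ℝ)^2) ≠ 0 := by
      have : (k.1 : ℝ) ≠ 0 ∨ (k.2 : ℝ) ≠ 0 := by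
        rcases (Prod.ext_iff.not.mp hk) with _
        by_contra hcon
        push_neg at hcon
        apply hk
        have h1 : k.1 = 0 := by exact_mod_cast hcon.1
        have h2 : k.2 = 0 := by exact_mod_cast hcon.2
        exact Prod.ext h1 h2
      rcases this with h1 | h2
      · positivity
      · positivity
    refine ⟨(-((zR t).1 - R₀.1) * (k.2 : ℝ) + ((zR t).2 - R₀.2) * (k.1 : ℝ)) /
      ((k.1 : ℝ)^2 + (k.2 : ℝ)^2), ?_⟩
    have hkey := key t ht
    have e1 : (zR t).1 = R₀.1 +
        (-((zR t).1 - R₀.1) * (k.2 : ℝ) + ((zR t).2 - R₀.2) * (k.1 : ℝ)) /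
          ((k.1 : ℝ)^2 + (k.2 : ℝ)^2) * (-(k.2 : ℝ)) := by
      field_simp
      linear_combination (k.1 : ℝ) * hkey
    have e2 : (zR t).2 = R₀.2 +
        (-((zR t).1 - R₀.1) * (k.2 : ℝ) + ((zR t).2 - R₀.2) * (k.1 : ℝ)) /
          ((k.1 : ℝ)^2 + (k.2 : ℝ)^2) * (k.1 : ℝ) := by
      field_simp
      linear_combination (k.2 : ℝ) * hkey
    exact Prod.ext e1 e2
  -- the angle combination `⟨zθ, k⊥⟩` is conserved
  have hsin : ∀ t ∈ I,
      Real.sin ((zθ t).1 * (-(k.2 : ℝ)) + (zθ t).2 * (k.1 : ℝ)) = 1 := by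
    have hc := const_of_zero_deriv I hI h0I
      (fun t => (zθ t).1 * (-(k.2 : ℝ)) + (zθ t).2 * (k.1 : ℝ))
      (by
        intro t ht
        obtain ⟨c, hc1, hc2⟩ := hgrad (zR t) (hmem t ht)
        have h1 := (hode t ht).1
        have h2 := (hode t ht).2.1
        rw [hc1] at h1
        rw [hc2] at h2
        have := (h1.mul_const (-(k.2 : ℝ))).add (h2.mul_const (k.1 : ℝ))
        convert this using 1
        all_goals first | rfl | ring)
    intro t ht
    have := hc t ht
    simp only [hinit.1] at this
    rw [this, hθ₀]
  -- integrate the action equations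
  intro t ht
  have e1 : (zR t).1 = R₀.1 + t * ε * (-(k.2 : ℝ)) := by
    have hc := const_of_zero_deriv I hI h0I
      (fun s => (zR s).1 - s * ε * (-(k.2 : ℝ)))
      (by
        intro u hu
        have h3 := (hode u hu).2.2.1
        rw [hsin u hu] at h3
        have hlin : HasDerivAt (fun s : ℝ => s * ε * (-(k.2 : ℝ)))
            (ε * (-(k.2 : ℝ))) u := by
          simpa [mul_assoc] using (hasDerivAt_id u).mul_const (ε * (-(k.2 : ℝ)))
        have := h3.sub hlin
        convert this using 1
        all_goals first | rfl | ring)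
    have h' := hc t ht
    simp only [hinit.2, zero_mul, mul_zero, sub_zero] at h'
    linarith [h']
  have e2 : (zR t).2 = R₀.2 + t * ε * (k.1 : ℝ) := by
    have hc := const_of_zero_deriv I hI h0I
      (fun s => (zR s).2 - s * ε * (k.1 : ℝ))
      (by
        intro u hu
        have h4 := (hode u hu).2.2.2
        rw [hsin u hu] at h4
        have hlin : HasDerivAt (fun s : ℝ => s * ε * (k.1 : ℝ))
            (ε * (k.1 : ℝ)) u := by
          simpa [mul_assoc] using (hasDerivAt_id u).mul_const (ε * (k.1 : ℝ))
        have := h4.sub hlin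
        convert this using 1
        all_goals first | rfl | ring)
    have h' := hc t ht
    simp only [hinit.2, zero_mul, mul_zero, sub_zero] at h'
    linarith [h']
  exact Prod.ext e1 e2
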